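/- No ordinal metric on ω₁ satisfies the triangle inequality of metric spaces; that is, for every ordinal metric ρ : ω₁ × ω₁ → ω there exist α, β, γ ∈ ω₁ with ρ(β,γ) > ρ(α,β) + ρ(α,γ). -/

import Mathlib

/-- An ordinal metric on a set `X` of ordinals: a function `ρ : X² → ω` such that
(a) `ρ α β = 0` iff `α = β`; (b) `ρ` is symmetric; (c) if `α ≤ β, γ` then
`ρ α β ≤ max (ρ α γ) (ρ β γ)`; (d) every ball `{α ≤ β : ρ α β ≤ k}` is finite. -/
def IsOrdinalMetric (X : Set Ordinal) (ρ : Ordinal → Ordinal → ℕ) : Prop :=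
  (∀ α ∈ X, ∀ β ∈ X, (ρ α β = 0 ↔ α = β)) ∧
  (∀ α ∈ X, ∀ β ∈ X, ρ α β = ρ β α) ∧
  (∀ α ∈ X, ∀ β ∈ X, ∀ γ ∈ X, α ≤ β → α ≤ γ → ρ α β ≤ max (ρ α γ) (ρ β γ)) ∧
  (∀ β ∈ X, ∀ k : ℕ, {α | α ∈ X ∧ α ≤ β ∧ ρ α β ≤ k}.Finite)

/-- No ordinal metric over `ω₁` satisfies the triangle inequality of metric spaces:
there are `α, β, γ < ω₁` with `ρ β γ > ρ α β + ρ α γ`. -/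
theorem no_ordinal_metric_on_omega1_is_a_metric
    (ρ : Ordinal → Ordinal → ℕ)
    (h : IsOrdinalMetric (Set.Iio (Cardinal.aleph 1).ord) ρ) :
    ∃ α ∈ Set.Iio (Cardinal.aleph 1).ord, ∃ β ∈ Set.Iio (Cardinal.aleph 1).ord,
      ∃ γ ∈ Set.Iio (Cardinal.aleph 1).ord, ρ α β + ρ α γ < ρ β γ := by
  obtain ⟨-, -, -, hball⟩ := h
  by_contra hcon
  push_neg at hcon
  set X := Set.Iio (Cardinal.aleph 1).ord with hX
  have h0 : (0 : Ordinal) ∈ X := by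
    simp only [hX, Set.mem_Iio]
    simpa [Cardinal.ord_zero] using Cardinal.ord_lt_ord.mpr (Cardinal.aleph_pos 1)
  -- X is uncountable
  have huncount : ¬ X.Countable := by
    intro hc
    have hmk : Cardinal.mk X ≤ Cardinal.aleph0 := hc.le_aleph0
    rw [hX, Ordinal.mk_Iio_ordinal, Cardinal.card_ord] at hmk
    exact absurd (Cardinal.lift_le_aleph0.mp hmk) (not_le.mpr Cardinal.aleph0_lt_aleph_one)
  -- some fiber of α ↦ ρ 0 α is infinite
  have hfiber : ∃ n : ℕ, (X ∩ {α | ρ 0 α = n}).Infinite := by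
    by_contra hfin
    push_neg at hfin
    have hsub : X ⊆ ⋃ n : ℕ, (X ∩ {α | ρ 0 α = n}) := fun a ha =>
      Set.mem_iUnion.mpr ⟨ρ 0 a, ha, rfl⟩
    exact huncount ((Set.countable_iUnion fun n => (hfin n).countable).mono hsub)
  obtain ⟨n, hF⟩ := hfiber
  classical
  let e := hF.natEmbedding
  set β : Ordinal := ⨆ i : ℕ, (e i : Ordinal) with hβ
  have hβX : β ∈ X := by
    refine Set.mem_Iio.mpr ?_
    rw [hβ]
    refine Cardinal.iSup_lt_ord_lift_of_isRegular Cardinal.isRegular_aleph_one ?_ ?_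
    · simpa using Cardinal.aleph0_lt_aleph_one
    · intro i
      exact (e i).2.1
  -- all e i are in the ball around β of radius n + ρ 0 β
  have hmem : ∀ i : ℕ, (e i : Ordinal) ∈ {α | α ∈ X ∧ α ≤ β ∧ ρ α β ≤ n + ρ 0 β} := by
    intro i
    refine ⟨(e i).2.1, hβ ▸ Ordinal.le_iSup (fun i : ℕ => (e i : Ordinal)) i, ?_⟩
    have htri := hcon 0 h0 (e i) (e i).2.1 β hβX
    have : ρ 0 (e i : Ordinal) = n := (e i).2.2
    omega
  have hinf : {α | α ∈ X ∧ α ≤ β ∧ ρ α β ≤ n + ρ 0 β}.Infinite := by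
    refine Set.infinite_of_injective_forall_mem (f := fun i : ℕ => (e i : Ordinal)) ?_ hmem
    intro i j hij
    exact e.injective (Subtype.ext hij)
  exact hinf (hball β hβX (n + ρ 0 β))
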